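/- For every 1 ≤ i ≤ n one has a_i·S ⊆ S_i. Consequently, if M ⊆ {1,…,n} satisfies Σ_{i∈M} Ra_i = R, then S = Σ_{i∈M} S_i, and hence S is spanned over R by the set B_M = {v(i,j) : 1 ≤ i < j ≤ n, {i,j} ∩ M ≠ ∅}. -/

import Mathlib

/-- Lemma `gen`: for every `i`, `aᵢ • S ⊆ Sᵢ`; consequently if `M` satisfies
`Σ_{i∈M} R aᵢ = R`, then `S = Σ_{i∈M} Sᵢ` and `S` is spanned by
`B_M = {v(i,j) : i < j, {i,j} ∩ M ≠ ∅}`. -/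
theorem stmt_0 {R : Type*} [Ring R] [Nontrivial R]
    {n : ℕ} (hn : 2 ≤ n) (a : Fin n → R)
    (hcen : ∀ i, a i ∈ Set.center R)
    (huni : Ideal.span (Set.range a) = ⊤)
    (S : Submodule R (Fin n → R))
    (hS : ∀ x, x ∈ S ↔ ∑ i, a i * x i = 0)
    (v : Fin n → Fin n → Fin n → R)
    (hv : ∀ i j k, v i j k = if k = i then -a j else if k = j then a i else 0)
    (Si : Fin n → Submodule R (Fin n → R))
    (hSi : ∀ i, Si i = Submodule.span R {x | ∃ j, j ≠ i ∧ x = v i j})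
    (M : Finset (Fin n))
    (hM : Ideal.span (a '' (M : Set (Fin n))) = ⊤) :
    (∀ i, ∀ x ∈ S, a i • x ∈ Si i) ∧
    S = ∑ i ∈ M, Si i ∧
    S = Submodule.span R {x | ∃ i j, i < j ∧ (i ∈ M ∨ j ∈ M) ∧ x = v i j} := by
  have hcomm : ∀ i (r : R), a i * r = r * a i := fun i r =>
    (Set.mem_center_iff.mp (hcen i)).comm r
  -- each v i j (j ≠ i) lies in S
  have hvS : ∀ i j, j ≠ i → v i j ∈ S := by
    intro i j hji
    rw [hS]
    have hterm : ∀ k, a k * v i j k =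
        (if k = i then -(a i * a j) else 0) + (if k = j then a j * a i else 0) := by
      intro k
      rw [hv]
      rcases eq_or_ne k i with rfl | h1
      · rw [if_pos rfl, if_pos rfl, if_neg (fun h => hji h.symm), mul_neg, add_zero]
      · rw [if_neg h1, if_neg h1]
        rcases eq_or_ne k j with rfl | h2
        · rw [if_pos rfl, if_pos rfl, zero_add]
        · rw [if_neg h2, if_neg h2, mul_zero, add_zero]
    simp_rw [hterm]
    rw [Finset.sum_add_distrib, Finset.sum_ite_eq', Finset.sum_ite_eq']
    simp [hcomm j (a i)]
  -- v is antisymmetric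
  have vneg : ∀ i j, i ≠ j → v i j = -v j i := by
    intro i j h
    funext k
    simp only [Pi.neg_apply]
    rw [hv, hv]
    rcases eq_or_ne k i with rfl | h1
    · rw [if_pos rfl, if_neg h, if_pos rfl]
    · rw [if_neg h1]
      rcases eq_or_ne k j with rfl | h2
      · rw [if_pos rfl, if_pos rfl, neg_neg]
      · rw [if_neg h2, if_neg h2, if_neg h1, neg_zero]
  -- key identity
  have key : ∀ i, ∀ x ∈ S, a i • x = ∑ j ∈ Finset.univ.erase i, x j • v i j := by
    intro i x hx
    have hsum : ∑ j, x j * a j = 0 := by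
      rw [← (hS x).mp hx]
      exact Finset.sum_congr rfl fun j _ => (hcomm j (x j)).symm
    funext k
    simp only [Pi.smul_apply, smul_eq_mul, Finset.sum_apply]
    by_cases hk : k = i
    · subst hk
      have h1 : ∀ j ∈ Finset.univ.erase k, x j * v k j k = -(x j * a j) := by
        intro j hj
        rw [hv]
        simp
      rw [Finset.sum_congr rfl h1, Finset.sum_neg_distrib]
      have h2 : ∑ j ∈ Finset.univ.erase k, x j * a j = - (x k * a k) := by
        have h3 := Finset.add_sum_erase Finset.univ (fun j => x j * a j) (Finset.mem_univ k)
        rw [hsum] at h3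
        exact eq_neg_of_add_eq_zero_right h3
      rw [h2, neg_neg, hcomm]
    · have h1 : ∀ j ∈ Finset.univ.erase i, x j * v i j k =
          if j = k then x j * a i else 0 := by
        intro j hj
        rw [hv, if_neg hk]
        rcases eq_or_ne j k with rfl | hjk
        · rw [if_pos rfl, if_pos rfl]
        · rw [if_neg (fun hh => hjk hh.symm), if_neg hjk, mul_zero]
      rw [Finset.sum_congr rfl h1, Finset.sum_ite_eq']
      simp [Finset.mem_erase, hk, hcomm]
  -- part 1
  have part1 : ∀ i, ∀ x ∈ S, a i • x ∈ Si i := by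
    intro i x hx
    rw [key i x hx, hSi]
    exact Submodule.sum_mem _ fun j hj =>
      Submodule.smul_mem _ _ (Submodule.subset_span ⟨j, (Finset.mem_erase.mp hj).1, rfl⟩)
  have hSiS : ∀ i, Si i ≤ S := by
    intro i
    rw [hSi, Submodule.span_le]
    rintro x ⟨j, hji, rfl⟩
    exact hvS i j hji
  -- a combination giving 1
  obtain ⟨l, hl, hl1⟩ := (Finsupp.mem_span_image_iff_linearCombination R).mp
    (hM ▸ Submodule.mem_top : (1 : R) ∈ Ideal.span (a '' (M : Set (Fin n))))
  have hsub : l.support ⊆ M := fun i hi => Finset.mem_coe.mp (hl hi)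
  have hc : ∑ i ∈ M, l i * a i = 1 := by
    rw [← hl1, Finsupp.linearCombination_apply, Finsupp.sum]
    simp only [smul_eq_mul]
    exact (Finset.sum_subset hsub fun i _ hi => by
      rw [Finsupp.notMem_support_iff.mp hi, zero_mul]).symm
  have hle : ∀ i ∈ M, Si i ≤ ∑ i ∈ M, Si i := fun i hi =>
    Finset.single_le_sum (f := Si) (fun _ _ => zero_le) hi
  have sum_le : ∀ (T : Submodule R (Fin n → R)), (∀ i ∈ M, Si i ≤ T) →
      ∑ i ∈ M, Si i ≤ T := by
    intro T hT
    refine Finset.sum_induction Si (· ≤ T) (fun p q hp hq => ?_) (zero_le : 0 ≤ T) hT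
    rw [Submodule.add_eq_sup]
    exact sup_le hp hq
  have part2 : S = ∑ i ∈ M, Si i := by
    apply le_antisymm
    · intro x hx
      have hxeq : x = ∑ i ∈ M, l i • (a i • x) := by
        have : ∑ i ∈ M, l i • (a i • x) = (∑ i ∈ M, l i * a i) • x := by
          rw [Finset.sum_smul]
          exact Finset.sum_congr rfl fun i _ => smul_smul (l i) (a i) x
        rw [this, hc, one_smul]
      rw [hxeq]
      exact Submodule.sum_mem _ fun i hi =>
        hle i hi (Submodule.smul_mem _ _ (part1 i x hx))
    · exact sum_le S fun i _ => hSiS i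
  refine ⟨part1, part2, ?_⟩
  rw [part2]
  apply le_antisymm
  · apply sum_le
    intro i hi
    rw [hSi, Submodule.span_le]
    rintro x ⟨j, hji, rfl⟩
    rcases lt_or_gt_of_ne hji with h | h
    · rw [vneg i j (Ne.symm hji)]
      exact Submodule.neg_mem _ (Submodule.subset_span ⟨j, i, h, Or.inr hi, rfl⟩)
    · exact Submodule.subset_span ⟨i, j, h, Or.inl hi, rfl⟩
  · rw [Submodule.span_le]
    rintro x ⟨i, j, hij, hm, rfl⟩
    rcases hm with hi | hj
    · exact hle i hi ((hSi i) ▸ Submodule.subset_span ⟨j, hij.ne', rfl⟩)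
    · rw [vneg i j hij.ne]
      exact hle j hj (Submodule.neg_mem _ ((hSi j) ▸ Submodule.subset_span ⟨i, hij.ne, rfl⟩))
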